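/- Let 0 < r < 1 and let a, b be positive semidefinite n×n complex matrices. Then ‖a‖_r + ‖b‖_r ≤ ‖a + b‖_r, where ‖x‖_r = (tr(|x|^r))^{1/r} denotes the Schatten r-quasinorm. -/

import Mathlib

open scoped ComplexOrder
open Finset Matrix

/-- The Schatten `r`-quasinorm of a positive semidefinite matrix, defined via
functional calculus: `‖A‖_r = (tr (A^r))^(1/r)`. -/
noncomputable def psdSchattenNorm {n : ℕ} (r : ℝ) {A : Matrix (Fin n) (Fin n) ℂ}
    (hA : A.PosSemidef) : ℝ :=
  ((hA.1.cfc fun t => t ^ r).trace.re) ^ (1 / r)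

private lemma trace_cfc_re' {n : ℕ} {A : Matrix (Fin n) (Fin n) ℂ} (hA : A.IsHermitian)
    (f : ℝ → ℝ) : (hA.cfc f).trace.re = ∑ i, f (hA.eigenvalues i) := by
  rw [Matrix.IsHermitian.cfc, Unitary.conjStarAlgAut_apply, Matrix.trace_mul_cycle, Unitary.coe_star_mul_self, one_mul,
    Matrix.trace_diagonal]
  simp [Function.comp]

private lemma conj_diag_nonneg' {n : ℕ} {M : Matrix (Fin n) (Fin n) ℂ} (hM : M.PosSemidef)
    (U : Matrix (Fin n) (Fin n) ℂ) (i : Fin n) : 0 ≤ ((star U * M * U) i i).re := by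
  have h := (hM.conjTranspose_mul_mul_same U).dotProduct_mulVec_nonneg (Pi.single i 1)
  rw [← Matrix.star_eq_conjTranspose] at h
  have hs : star (Pi.single i 1 : Fin n → ℂ) = Pi.single i 1 := by
    ext x; simp [Pi.single_apply, apply_ite]
  rw [hs, single_dotProduct, one_mul, Matrix.mulVec_single] at h
  simp only [MulOpposite.op_one, one_smul, Matrix.col_apply] at h
  exact (Complex.le_def.mp h).1

private lemma jensen_step' {n : ℕ} {r : ℝ} (hr0 : 0 < r) (hr1 : r < 1) (w : Fin n → Fin n → ℝ)
    (α : Fin n → ℝ) (hw : ∀ i j, 0 ≤ w i j) (hα : ∀ j, 0 ≤ α j)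
    (hrow : ∀ i, ∑ j, w i j = 1) (hcol : ∀ j, ∑ i, w i j = 1) :
    ∑ j, α j ^ r ≤ ∑ i, (∑ j, w i j * α j) ^ r := by
  have jen : ∀ i, ∑ j, w i j * α j ^ r ≤ (∑ j, w i j * α j) ^ r := by
    intro i
    have := (Real.concaveOn_rpow hr0.le hr1.le).le_map_sum (t := univ)
      (fun j _ => hw i j) (hrow i) (fun j _ => hα j)
    simpa [smul_eq_mul] using this
  calc ∑ j, α j ^ r = ∑ j, (∑ i, w i j) * α j ^ r := by
        simp [hcol]
    _ = ∑ i, ∑ j, w i j * α j ^ r := by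
        rw [Finset.sum_comm]
        simp [Finset.sum_mul]
    _ ≤ ∑ i, (∑ j, w i j * α j) ^ r := Finset.sum_le_sum fun i _ => jen i

private lemma holder_step' {n : ℕ} {r : ℝ} (hr0 : 0 < r) (hr1 : r < 1) (μ a : Fin n → ℝ)
    (hμ : ∀ i, 0 ≤ μ i) (ha : ∀ i, 0 ≤ a i) (hz : ∀ i, μ i = 0 → a i = 0) :
    ∑ i, a i ^ r ≤ (∑ i, μ i ^ (r-1) * a i) ^ r * (∑ i, μ i ^ r) ^ (1-r) := by
  have h1r : 0 < 1 - r := by linarith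
  have hpq : Real.HolderConjugate (1/r) (1/(1-r)) := by
    rw [Real.holderConjugate_iff]; constructor
    · rw [lt_div_iff₀ hr0]; linarith
    · rw [one_div, one_div, inv_inv, inv_inv]; ring
  have key := Real.inner_le_Lp_mul_Lq_of_nonneg (s := univ)
      (f := fun i => (μ i ^ (r-1) * a i) ^ r) (g := fun i => μ i ^ (r*(1-r))) hpq
      (fun i _ => Real.rpow_nonneg (mul_nonneg (Real.rpow_nonneg (hμ i) _) (ha i)) _)
      (fun i _ => Real.rpow_nonneg (hμ i) _)
  have hfg : ∀ i : Fin n, (μ i ^ (r-1) * a i) ^ r * μ i ^ (r*(1-r)) = a i ^ r := by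
    intro i
    rcases (hμ i).eq_or_lt with h | h
    · rw [hz i h.symm, ← h]
      rw [Real.zero_rpow (show r - 1 ≠ 0 from sub_ne_zero.mpr hr1.ne), zero_mul,
        Real.zero_rpow hr0.ne', Real.zero_rpow (show r*(1-r) ≠ 0 from
          (mul_pos hr0 h1r).ne'), zero_mul]
    · rw [Real.mul_rpow (Real.rpow_nonneg (hμ i) _) (ha i), ← Real.rpow_mul (hμ i),
        mul_comm ((μ i ^ ((r-1)*r))) (a i ^ r), mul_assoc, ← Real.rpow_add h]
      have : (r-1)*r + r*(1-r) = 0 := by ring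
      rw [this, Real.rpow_zero, mul_one]
  have hfp : ∀ i : Fin n, ((μ i ^ (r-1) * a i) ^ r) ^ (1/r) = μ i ^ (r-1) * a i := by
    intro i
    rw [← Real.rpow_mul (mul_nonneg (Real.rpow_nonneg (hμ i) _) (ha i)),
      mul_one_div_cancel hr0.ne', Real.rpow_one]
  have hgq : ∀ i : Fin n, (μ i ^ (r*(1-r))) ^ (1/(1-r)) = μ i ^ r := by
    intro i
    rw [← Real.rpow_mul (hμ i), mul_assoc, mul_one_div_cancel h1r.ne', mul_one]
  calc ∑ i, a i ^ r = ∑ i, (μ i ^ (r-1) * a i) ^ r * μ i ^ (r*(1-r)) := by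
        exact (Finset.sum_congr rfl fun i _ => (hfg i)).symm
    _ ≤ (∑ i, ((μ i ^ (r-1) * a i) ^ r) ^ (1/r)) ^ (1/(1/r))
        * (∑ i, (μ i ^ (r*(1-r))) ^ (1/(1-r))) ^ (1/(1/(1-r))) := key
    _ = (∑ i, μ i ^ (r-1) * a i) ^ r * (∑ i, μ i ^ r) ^ (1-r) := by
        rw [one_div_one_div, one_div_one_div]
        congr 1
        · congr 1; exact Finset.sum_congr rfl fun i _ => hfp i
        · congr 1; exact Finset.sum_congr rfl fun i _ => hgq i

private lemma sum_eig_rpow_le' {n : ℕ} {r : ℝ} (hr0 : 0 < r) (hr1 : r < 1)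
    {M : Matrix (Fin n) (Fin n) ℂ} (hM : M.PosSemidef)
    {U : Matrix (Fin n) (Fin n) ℂ} (hU : U ∈ Matrix.unitaryGroup (Fin n) ℂ) :
    ∑ j, hM.1.eigenvalues j ^ r ≤ ∑ i, ((star U * M * U) i i).re ^ r := by
  set V : Matrix (Fin n) (Fin n) ℂ := (hM.1.eigenvectorUnitary : Matrix (Fin n) (Fin n) ℂ)
    with hVdef
  set W : Matrix (Fin n) (Fin n) ℂ := star U * V with hWdef
  have hVV : V * star V = 1 := Unitary.coe_mul_star_self (hM.1.eigenvectorUnitary)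
  have hVV' : star V * V = 1 := Unitary.coe_star_mul_self (hM.1.eigenvectorUnitary)
  have hUU : U * star U = 1 := (Matrix.mem_unitaryGroup_iff.mp hU)
  have hUU' : star U * U = 1 := (Matrix.mem_unitaryGroup_iff'.mp hU)
  have hWW : W * star W = 1 := by
    rw [hWdef, Matrix.star_mul, star_star, Matrix.mul_assoc, ← Matrix.mul_assoc V, hVV,
      Matrix.one_mul, hUU']
  have hWW' : star W * W = 1 := by
    rw [hWdef, Matrix.star_mul, star_star, Matrix.mul_assoc, ← Matrix.mul_assoc U, hUU,
      Matrix.one_mul, hVV']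
  have hconj : star U * M * U
      = W * diagonal ((RCLike.ofReal : ℝ → ℂ) ∘ hM.1.eigenvalues) * star W := by
    conv_lhs => rw [hM.1.spectral_theorem, Unitary.conjStarAlgAut_apply]
    rw [hWdef, Matrix.star_mul, star_star]
    simp only [← hVdef, Matrix.mul_assoc]
  have hentry : ∀ i, ((star U * M * U) i i).re
      = ∑ j, Complex.normSq (W i j) * hM.1.eigenvalues j := by
    intro i
    rw [hconj, Matrix.mul_apply]
    rw [Complex.re_sum]
    refine Finset.sum_congr rfl fun j _ => ?_
    rw [Matrix.mul_diagonal]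
    rw [mul_comm (W i j), mul_assoc, Matrix.star_apply,
      show star (W i j) = (starRingEnd ℂ) (W i j) from rfl, Complex.mul_conj]
    simp [mul_comm]
  calc ∑ j, hM.1.eigenvalues j ^ r
      ≤ ∑ i, (∑ j, Complex.normSq (W i j) * hM.1.eigenvalues j) ^ r := by
        refine jensen_step' hr0 hr1 _ _ (fun i j => Complex.normSq_nonneg _)
          (fun j => hM.eigenvalues_nonneg j) (fun i => ?_) (fun j => ?_)
        · have h1 := congrArg (fun X => (X i i).re) hWW
          simp only [Matrix.mul_apply, Complex.re_sum, Matrix.one_apply_eq, Complex.one_re] at h1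
          rw [← h1]
          refine Finset.sum_congr rfl fun j _ => ?_
          rw [Matrix.star_apply, show star (W i j) = (starRingEnd ℂ) (W i j) from rfl,
            Complex.mul_conj]
          simp
        · have h1 := congrArg (fun X => (X j j).re) hWW'
          simp only [Matrix.mul_apply, Complex.re_sum, Matrix.one_apply_eq, Complex.one_re] at h1
          rw [← h1]
          refine Finset.sum_congr rfl fun i _ => ?_
          rw [Matrix.star_apply, show star (W i j) = (starRingEnd ℂ) (W i j) from rfl, mul_comm,
            Complex.mul_conj]
          simp
    _ = ∑ i, ((star U * M * U) i i).re ^ r := by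
        refine Finset.sum_congr rfl fun i _ => ?_
        rw [hentry i]

/-- Reverse triangle inequality for the Schatten `r`-quasinorm, `0 < r < 1`,
on positive semidefinite matrices: `‖a‖_r + ‖b‖_r ≤ ‖a + b‖_r`. -/
theorem psd_schatten_reverse_triangle {n : ℕ} {r : ℝ} (hr0 : 0 < r) (hr1 : r < 1)
    {A B : Matrix (Fin n) (Fin n) ℂ} (hA : A.PosSemidef) (hB : B.PosSemidef) :
    psdSchattenNorm r hA + psdSchattenNorm r hB ≤ psdSchattenNorm r (hA.add hB) := by
  classical
  simp only [psdSchattenNorm]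
  rw [trace_cfc_re', trace_cfc_re', trace_cfc_re']
  set U : Matrix (Fin n) (Fin n) ℂ :=
    ((hA.add hB).1.eigenvectorUnitary : Matrix (Fin n) (Fin n) ℂ) with hUdef
  have hUmem : U ∈ Matrix.unitaryGroup (Fin n) ℂ := ((hA.add hB).1.eigenvectorUnitary).2
  set μ : Fin n → ℝ := (hA.add hB).1.eigenvalues with hμdef
  set a : Fin n → ℝ := fun i => ((star U * A * U) i i).re with hadef
  set b : Fin n → ℝ := fun i => ((star U * B * U) i i).re with hbdef
  have ha : ∀ i, 0 ≤ a i := fun i => conj_diag_nonneg' hA U i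
  have hb : ∀ i, 0 ≤ b i := fun i => conj_diag_nonneg' hB U i
  have hμ0 : ∀ i, 0 ≤ μ i := fun i => (hA.add hB).eigenvalues_nonneg i
  have hab : ∀ i, a i + b i = μ i := by
    intro i
    have hd := Matrix.IsHermitian.conjStarAlgAut_star_eigenvectorUnitary (hA.add hB).1
    simp only [Unitary.conjStarAlgAut_apply, Unitary.coe_star, star_star] at hd
    have h1 : star U * (A + B) * U = star U * A * U + star U * B * U := by
      rw [Matrix.mul_add, Matrix.add_mul]
    rw [h1] at hd
    have h2 := congrArg (fun X => (X i i).re) hd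
    simpa [Matrix.diagonal_apply_eq, Function.comp] using h2
  have hzA : ∀ i, μ i = 0 → a i = 0 := by
    intro i h
    have := hab i
    have h1 := ha i; have h2 := hb i
    linarith [this, h ▸ this]
  have hzB : ∀ i, μ i = 0 → b i = 0 := by
    intro i h
    have := hab i
    have h1 := ha i; have h2 := hb i
    linarith [this, h ▸ this]
  set T : ℝ := ∑ i, μ i ^ r with hTdef
  set xA : ℝ := ∑ i, μ i ^ (r-1) * a i with hxAdef
  set xB : ℝ := ∑ i, μ i ^ (r-1) * b i with hxBdef
  have hTnn : 0 ≤ T := Finset.sum_nonneg fun i _ => Real.rpow_nonneg (hμ0 i) _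
  have hxAnn : 0 ≤ xA :=
    Finset.sum_nonneg fun i _ => mul_nonneg (Real.rpow_nonneg (hμ0 i) _) (ha i)
  have hxBnn : 0 ≤ xB :=
    Finset.sum_nonneg fun i _ => mul_nonneg (Real.rpow_nonneg (hμ0 i) _) (hb i)
  have hxT : xA + xB = T := by
    rw [hxAdef, hxBdef, hTdef, ← Finset.sum_add_distrib]
    refine Finset.sum_congr rfl fun i _ => ?_
    rw [← mul_add, hab i]
    rcases (hμ0 i).eq_or_lt with h | h
    · rw [← h, Real.zero_rpow (sub_ne_zero.mpr hr1.ne), zero_mul, Real.zero_rpow hr0.ne']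
    · rw [show μ i ^ (r-1) * μ i = μ i ^ (r-1) * μ i ^ (1:ℝ) by rw [Real.rpow_one],
        ← Real.rpow_add h]
      congr 1
      ring
  have hone : (0:ℝ) ≤ 1/r := by positivity
  have keyA : (∑ j, hA.1.eigenvalues j ^ r) ^ (1/r) ≤ xA * T ^ ((1-r)/r) := by
    have h1 : ∑ j, hA.1.eigenvalues j ^ r ≤ xA ^ r * T ^ (1-r) :=
      (sum_eig_rpow_le' hr0 hr1 hA hUmem).trans (holder_step' hr0 hr1 μ a hμ0 ha hzA)
    have h2 := Real.rpow_le_rpow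
      (Finset.sum_nonneg fun j _ => Real.rpow_nonneg (hA.eigenvalues_nonneg j) _) h1 hone
    rwa [Real.mul_rpow (Real.rpow_nonneg hxAnn _) (Real.rpow_nonneg hTnn _),
      ← Real.rpow_mul hxAnn, mul_one_div_cancel hr0.ne', Real.rpow_one,
      ← Real.rpow_mul hTnn, mul_one_div] at h2
  have keyB : (∑ j, hB.1.eigenvalues j ^ r) ^ (1/r) ≤ xB * T ^ ((1-r)/r) := by
    have h1 : ∑ j, hB.1.eigenvalues j ^ r ≤ xB ^ r * T ^ (1-r) :=
      (sum_eig_rpow_le' hr0 hr1 hB hUmem).trans (holder_step' hr0 hr1 μ b hμ0 hb hzB)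
    have h2 := Real.rpow_le_rpow
      (Finset.sum_nonneg fun j _ => Real.rpow_nonneg (hB.eigenvalues_nonneg j) _) h1 hone
    rwa [Real.mul_rpow (Real.rpow_nonneg hxBnn _) (Real.rpow_nonneg hTnn _),
      ← Real.rpow_mul hxBnn, mul_one_div_cancel hr0.ne', Real.rpow_one,
      ← Real.rpow_mul hTnn, mul_one_div] at h2
  calc (∑ j, hA.1.eigenvalues j ^ r) ^ (1/r) + (∑ j, hB.1.eigenvalues j ^ r) ^ (1/r)
      ≤ xA * T ^ ((1-r)/r) + xB * T ^ ((1-r)/r) := add_le_add keyA keyB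
    _ = T * T ^ ((1-r)/r) := by rw [← add_mul, hxT]
    _ = T ^ (1/r) := by
        rcases hTnn.eq_or_lt with h | h
        · rw [← h, Real.zero_rpow (show (1-r)/r ≠ 0 from
            (div_pos (by linarith) hr0).ne'), mul_zero,
            Real.zero_rpow (show 1/r ≠ 0 from (one_div_pos.mpr hr0).ne')]
        · rw [show T * T ^ ((1-r)/r) = T ^ (1:ℝ) * T ^ ((1-r)/r) by rw [Real.rpow_one],
            ← Real.rpow_add h]
          congr 1
          field_simp
          ring
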